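/- Let Γ be an index set and let W be a real Banach space isomorphic (linearly homeomorphic) to ℓ₁(Γ). Then W has the alternate lifting property (ALP): for all Banach spaces X and Y, every bounded linear surjection ψ : X → W and every bounded linear operator S : Y → W, there exists a bounded linear operator Ŝ : Y → X with S = ψ ∘ Ŝ. -/

import Mathlib

/-- If a Banach space `W` is isomorphic (linearly homeomorphic) to `ℓ₁(Γ)`,
then `W` has the alternate lifting property (ALP). -/
theorem alp_of_isomorphic_to_l1
    {W : Type*} [NormedAddCommGroup W] [NormedSpace ℝ W] [CompleteSpace W]
    {Γ : Type*} (e : W ≃L[ℝ] lp (fun _ : Γ => ℝ) 1) :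
    ∀ (X Y : Type*) [NormedAddCommGroup X] [NormedSpace ℝ X] [CompleteSpace X]
      [NormedAddCommGroup Y] [NormedSpace ℝ Y] [CompleteSpace Y]
      (ψ : X →L[ℝ] W), Function.Surjective ψ → ∀ S : Y →L[ℝ] W,
      ∃ T : Y →L[ℝ] X, ∀ y, ψ (T y) = S y := by
  classical
  intro X Y _ _ _ _ _ _ ψ hψ S
  obtain ⟨C, Cpos, hC⟩ := ψ.exists_preimage_norm_le hψ
  set E : lp (fun _ : Γ => ℝ) 1 →L[ℝ] W := (e.symm : lp (fun _ : Γ => ℝ) 1 →L[ℝ] W) with hE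
  choose x hx hxn using fun γ => hC (E (lp.single 1 γ (1 : ℝ)))
  have hp1 : (0:ℝ) < (1 : ENNReal).toReal := by simp
  set K : ℝ := C * ‖E‖ with hK
  have hKnn : 0 ≤ K := mul_nonneg Cpos.le (norm_nonneg _)
  have hxK : ∀ γ, ‖x γ‖ ≤ K := by
    intro γ
    refine (hxn γ).trans ?_
    have h1 : ‖(lp.single 1 γ (1:ℝ) : lp (fun _ : Γ => ℝ) 1)‖ = 1 := by
      have := lp.norm_single (E := fun _ : Γ => ℝ) (p := 1) one_pos γ (1:ℝ)
      simpa using this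
    have := E.le_opNorm (lp.single 1 γ (1:ℝ))
    rw [h1, mul_one] at this
    calc C * ‖E (lp.single 1 γ (1:ℝ))‖ ≤ C * ‖E‖ := by
          exact mul_le_mul_of_nonneg_left this Cpos.le
      _ = K := rfl
  have hnorm_sum : ∀ a : lp (fun _ : Γ => ℝ) 1, Summable (fun γ => ‖a γ‖) := by
    intro a
    have := (lp.memℓp a).summable hp1
    simpa using this
  have hsumn : ∀ a : lp (fun _ : Γ => ℝ) 1, Summable (fun γ => ‖a γ • x γ‖) := by
    intro a
    refine Summable.of_nonneg_of_le (fun γ => norm_nonneg _) (fun γ => ?_)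
      ((hnorm_sum a).mul_right K)
    rw [norm_smul]
    exact mul_le_mul_of_nonneg_left (hxK γ) (norm_nonneg _)
  have hsum : ∀ a : lp (fun _ : Γ => ℝ) 1, Summable (fun γ => a γ • x γ) :=
    fun a => Summable.of_norm (hsumn a)
  have hnorm : ∀ a : lp (fun _ : Γ => ℝ) 1, ‖a‖ = ∑' γ, ‖a γ‖ := by
    intro a
    have := lp.norm_eq_tsum_rpow hp1 a
    simpa using this
  set L0 : lp (fun _ : Γ => ℝ) 1 →ₗ[ℝ] X :=
    { toFun := fun a => ∑' γ, a γ • x γ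
      map_add' := by
        intro a b
        have : (fun γ => (a + b : lp (fun _ : Γ => ℝ) 1) γ • x γ)
            = fun γ => a γ • x γ + b γ • x γ := by
          funext γ
          rw [lp.coeFn_add]
          simp [add_smul]
        dsimp only
        rw [this]
        exact Summable.tsum_add (hsum a) (hsum b)
      map_smul' := by
        intro c a
        have : (fun γ => (c • a : lp (fun _ : Γ => ℝ) 1) γ • x γ)
            = fun γ => c • (a γ • x γ) := by
          funext γ
          rw [lp.coeFn_smul]
          simp [smul_smul]
        dsimp only
        rw [this]
        simpa using (Summable.tsum_const_smul c (hsum a)) } with hL0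
  have hL0bound : ∀ a, ‖L0 a‖ ≤ K * ‖a‖ := by
    intro a
    calc ‖∑' γ, a γ • x γ‖ ≤ ∑' γ, ‖a γ • x γ‖ := norm_tsum_le_tsum_norm (hsumn a)
      _ ≤ ∑' γ, ‖a γ‖ * K := by
          refine Summable.tsum_le_tsum (fun γ => ?_) (hsumn a) ((hnorm_sum a).mul_right K)
          rw [norm_smul]
          exact mul_le_mul_of_nonneg_left (hxK γ) (norm_nonneg _)
      _ = K * ‖a‖ := by rw [tsum_mul_right, hnorm a, mul_comm]
  set L : lp (fun _ : Γ => ℝ) 1 →L[ℝ] X := L0.mkContinuous K hL0bound with hL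
  have hψL : ∀ a, ψ (L a) = E a := by
    intro a
    have h1 : ψ (L a) = ∑' γ, ψ (a γ • x γ) :=
      ψ.map_tsum (hsum a)
    have h2 : ∀ γ, ψ (a γ • x γ) = E (lp.single 1 γ (a γ)) := by
      intro γ
      rw [map_smul, hx γ, ← map_smul]
      congr 1
      have := lp.single_smul (E := fun _ : Γ => ℝ) (𝕜 := ℝ) 1 γ (a γ) (1:ℝ)
      rw [← this]
      simp
    rw [h1]
    have h3 : HasSum (fun γ => lp.single 1 γ (a γ)) a :=
      lp.hasSum_single (by norm_num) a
    have h4 : HasSum (fun γ => E (lp.single 1 γ (a γ))) (E a) :=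
      h3.mapL E
    calc ∑' γ, ψ (a γ • x γ) = ∑' γ, E (lp.single 1 γ (a γ)) := by
          exact tsum_congr h2
      _ = E a := h4.tsum_eq
  refine ⟨L.comp ((e : W →L[ℝ] lp (fun _ : Γ => ℝ) 1).comp S), fun y => ?_⟩
  simp only [ContinuousLinearMap.comp_apply, ContinuousLinearMap.coe_coe]
  rw [hψL]
  simp [hE]
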